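/- For every finite simple graph G, the independence number α(G) satisfies α(G) ≥ Σ_{v ∈ V(G)} 1/(1 + d(v)), where d(v) is the degree of v. -/

import Mathlib

open Finset

/-- The independence number of a graph: the largest cardinality of a set of
pairwise nonadjacent vertices. -/
noncomputable def indepNum {V : Type*} [Fintype V] (G : SimpleGraph V) : ℕ :=
  sSup {n | ∃ s : Finset V, (∀ v ∈ s, ∀ w ∈ s, ¬ G.Adj v w) ∧ s.card = n}

lemma wei_key {V : Type*} [Fintype V] [DecidableEq V] (G : SimpleGraph V)
    [DecidableRel G.Adj] :
    ∀ n (A : Finset V), A.card = n →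
    ∃ s : Finset V, s ⊆ A ∧ (∀ v ∈ s, ∀ w ∈ s, ¬ G.Adj v w) ∧
      (∑ v ∈ A, (1 : ℝ) / (1 + (A.filter (G.Adj v ·)).card)) ≤ s.card := by
  intro n
  induction n using Nat.strong_induction_on with
  | _ n ih =>
    intro A hA
    rcases A.eq_empty_or_nonempty with rfl | hne
    · exact ⟨∅, by simp, by simp, by simp⟩
    · obtain ⟨v, hvA, hmin⟩ :=
        A.exists_min_image (fun u => (A.filter (G.Adj u ·)).card) hne
      set N : Finset V := insert v (A.filter (G.Adj v ·)) with hN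
      set B : Finset V := A \ N with hB
      have hNsub : N ⊆ A := by
        intro x hx
        rcases mem_insert.mp hx with rfl | hx
        · exact hvA
        · exact (mem_filter.mp hx).1
      have hBsub : B ⊆ A := sdiff_subset
      have hvN : v ∈ N := mem_insert_self _ _
      have hvB : v ∉ B := fun h => (mem_sdiff.mp h).2 hvN
      have hBcard : B.card < n := by
        have h1 : B ⊆ A.erase v := by
          intro x hx
          exact mem_erase.mpr ⟨fun h => hvB (h ▸ hx), hBsub hx⟩
        calc B.card ≤ (A.erase v).card := card_le_card h1
          _ < A.card := card_erase_lt_of_mem hvA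
          _ = n := hA
      obtain ⟨s, hsB, hsind, hsum⟩ := ih B.card hBcard B rfl
      have hvs : v ∉ s := fun h => hvB (hsB h)
      have hadjB : ∀ w ∈ B, ¬ G.Adj v w := by
        intro w hw hadj
        exact (mem_sdiff.mp hw).2 (mem_insert_of_mem (mem_filter.mpr ⟨hBsub hw, hadj⟩))
      refine ⟨insert v s, ?_, ?_, ?_⟩
      · intro x hx
        rcases mem_insert.mp hx with rfl | hx
        · exact hvA
        · exact hBsub (hsB hx)
      · intro x hx y hy hadj
        rcases mem_insert.mp hx with hx' | hx1
        · rcases mem_insert.mp hy with hy' | hy1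
          · rw [hx', hy'] at hadj; exact G.irrefl hadj
          · rw [hx'] at hadj; exact hadjB y (hsB hy1) hadj
        · rcases mem_insert.mp hy with hy' | hy1
          · rw [hy'] at hadj; exact hadjB x (hsB hx1) hadj.symm
          · exact hsind x hx1 y hy1 hadj
      · -- sum bound
        have hsplit : A = N ∪ B := by
          rw [hB, union_sdiff_of_subset hNsub]
        have hdisj : Disjoint N B := disjoint_sdiff
        have hdv : (0:ℝ) < 1 + (A.filter (G.Adj v ·)).card := by have := (A.filter (G.Adj v ·)).card.cast_nonneg (α := ℝ); linarith
        have hNbound : (∑ u ∈ N, (1 : ℝ) / (1 + (A.filter (G.Adj u ·)).card)) ≤ 1 := by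
          have hcardN : (N.card : ℝ) = 1 + (A.filter (G.Adj v ·)).card := by
            rw [hN, card_insert_of_notMem (by simp)]
            push_cast; ring
          calc (∑ u ∈ N, (1 : ℝ) / (1 + (A.filter (G.Adj u ·)).card))
              ≤ ∑ u ∈ N, (1 : ℝ) / (1 + (A.filter (G.Adj v ·)).card) := by
                apply Finset.sum_le_sum
                intro u hu
                apply one_div_le_one_div_of_le hdv
                have h := hmin u (hNsub hu)
                have h' : ((A.filter (G.Adj v ·)).card : ℝ) ≤ (A.filter (G.Adj u ·)).card := by
                  exact_mod_cast h
                linarith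
            _ = N.card * ((1:ℝ) / (1 + (A.filter (G.Adj v ·)).card)) := by
                rw [Finset.sum_const, nsmul_eq_mul]
            _ = 1 := by rw [hcardN]; exact mul_one_div_cancel hdv.ne'
        have hBbound : (∑ u ∈ B, (1 : ℝ) / (1 + (A.filter (G.Adj u ·)).card)) ≤ s.card := by
          refine le_trans (Finset.sum_le_sum ?_) hsum
          intro u hu
          apply one_div_le_one_div_of_le (by have := (B.filter (G.Adj u ·)).card.cast_nonneg (α := ℝ); linarith)
          have hsub : B.filter (G.Adj u ·) ⊆ A.filter (G.Adj u ·) :=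
            filter_subset_filter _ hBsub
          have h' : ((B.filter (G.Adj u ·)).card : ℝ) ≤ (A.filter (G.Adj u ·)).card := by
            exact_mod_cast card_le_card hsub
          linarith
        have hset : (∑ u ∈ A, (1 : ℝ) / (1 + (A.filter (G.Adj u ·)).card))
            = (∑ u ∈ N, (1 : ℝ) / (1 + (A.filter (G.Adj u ·)).card))
            + (∑ u ∈ B, (1 : ℝ) / (1 + (A.filter (G.Adj u ·)).card)) := by
          rw [← Finset.sum_union hdisj, ← hsplit]
        rw [hset, card_insert_of_notMem hvs]
        push_cast
        linarith

/-- Wei's inequality: α(G) ≥ ∑_v 1/(1 + d(v)). -/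
theorem wei_indep {V : Type*} [Fintype V] (G : SimpleGraph V) [DecidableRel G.Adj] :
    (∑ v : V, (1 : ℝ) / (1 + G.degree v)) ≤ indepNum G := by
  classical
  obtain ⟨s, _, hind, hsum⟩ := wei_key G (Finset.univ.card) Finset.univ rfl
  have hdeg : ∀ v : V, (Finset.univ.filter (G.Adj v ·)).card = G.degree v := by
    intro v
    rw [← SimpleGraph.neighborFinset_eq_filter]
    rfl
  have hsum' : (∑ v : V, (1 : ℝ) / (1 + G.degree v)) ≤ s.card := by
    calc (∑ v : V, (1 : ℝ) / (1 + G.degree v))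
        = ∑ v ∈ Finset.univ, (1 : ℝ) / (1 + (Finset.univ.filter (G.Adj v ·)).card) := by
          refine Finset.sum_congr rfl fun v _ => by rw [hdeg]
      _ ≤ s.card := hsum
  have hle : s.card ≤ indepNum G := by
    apply le_csSup
    · exact ⟨Fintype.card V, fun n hn => by
        obtain ⟨t, _, rfl⟩ := hn; exact t.card_le_univ⟩
    · exact ⟨s, hind, rfl⟩
  calc (∑ v : V, (1 : ℝ) / (1 + G.degree v)) ≤ (s.card : ℝ) := hsum'
    _ ≤ indepNum G := Nat.cast_le.mpr hle
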